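/- Let P be a finite poset, k a field, and ⪯ a compatible monomial order on S = k[x_α : α ∈ L(P)]. Let L' ⊆ L(P) be a sublattice, i.e., a subset closed under intersection and union. If F_{L(P)} forms a Khovanskii basis of R(L(P)) with respect to ⪯, then F_{L'} := {f_{α,β} : α,β ∈ L' incomparable} forms a Khovanskii basis of R(L') := k[F_{L'}] with respect to ⪯. -/

import Mathlib

open MvPolynomial

/-- The leading exponent (multidegree) of a multivariate polynomial with respect to a
monomial order. -/
noncomputable def MonomialOrder.degree' {σ : Type*} (m : MonomialOrder σ)
    {R : Type*} [CommSemiring R] (f : MvPolynomial σ R) : σ →₀ ℕ :=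
  m.toSyn.symm (f.support.sup fun d => m.toSyn d)

/-- The leading term `in_⪯(f)` of a multivariate polynomial with respect to a
monomial order. -/
noncomputable def MonomialOrder.leadingTerm' {σ : Type*} (m : MonomialOrder σ)
    {R : Type*} [CommSemiring R] (f : MvPolynomial σ R) : MvPolynomial σ R :=
  MvPolynomial.monomial (m.degree' f) (f.coeff (m.degree' f))

/-- `F` is a Khovanskii (SAGBI) basis of the subalgebra `R` with respect to the monomial
order `m`: the subalgebra generated by the leading terms of nonzero elements of `F` equals
the subalgebra generated by the leading terms of nonzero elements of `R`. -/
def IsKhovanskiiBasis {σ k : Type*} [Field k] (m : MonomialOrder σ)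
    (R : Subalgebra k (MvPolynomial σ k)) (F : Set (MvPolynomial σ k)) : Prop :=
  F ⊆ (R : Set (MvPolynomial σ k)) ∧
  Algebra.adjoin k (m.leadingTerm' '' {f ∈ F | f ≠ 0}) =
    Algebra.adjoin k (m.leadingTerm' '' {f ∈ (R : Set (MvPolynomial σ k)) | f ≠ 0})

/-- The binomial `f_{α,β} = x_α x_β - x_{α⊓β} x_{α⊔β}`. -/
noncomputable def hibiPoly (k : Type*) [Field k] {σ : Type*} [Lattice σ] (α β : σ) :
    MvPolynomial σ k :=
  X α * X β - X (α ⊓ β) * X (α ⊔ β)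

/-- The set `F_L = {f_{α,β} : α, β ∈ L incomparable}`. -/
def hibiSet (k : Type*) [Field k] (σ : Type*) [Lattice σ] : Set (MvPolynomial σ k) :=
  {g | ∃ α β : σ, ¬ α ≤ β ∧ ¬ β ≤ α ∧ g = hibiPoly k α β}

/-- A monomial order is compatible if the leading term of each `f_{α,β}` is `x_α x_β`. -/
def IsCompatible (k : Type*) [Field k] {σ : Type*} [Lattice σ] (m : MonomialOrder σ) : Prop :=
  ∀ α β : σ, ¬ α ≤ β → ¬ β ≤ α → m.leadingTerm' (hibiPoly k α β) = X α * X β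

/-- `P` is `(2+2)`-free. -/
def TwoTwoFree (P : Type*) [PartialOrder P] : Prop :=
  ¬ ∃ a b c d : P, a < b ∧ c < d ∧ a ≠ c ∧ a ≠ d ∧ b ≠ c ∧ b ≠ d ∧
    ¬ a ≤ c ∧ ¬ c ≤ a ∧ ¬ a ≤ d ∧ ¬ d ≤ a ∧ ¬ b ≤ c ∧ ¬ c ≤ b ∧ ¬ b ≤ d ∧ ¬ d ≤ b

/-- `P` is `(1+1+1)`-free: no antichain of three elements. -/
def OneOneOneFree (P : Type*) [PartialOrder P] : Prop :=
  ¬ ∃ a b c : P, a ≠ b ∧ a ≠ c ∧ b ≠ c ∧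
    ¬ a ≤ b ∧ ¬ b ≤ a ∧ ¬ a ≤ c ∧ ¬ c ≤ a ∧ ¬ b ≤ c ∧ ¬ c ≤ b

/-- `P` is irreducible with respect to ordinal sum. -/
def OrdinalSumIrreducible (P : Type*) [PartialOrder P] : Prop :=
  ¬ ∃ A B : Set P, A.Nonempty ∧ B.Nonempty ∧ Disjoint A B ∧ A ∪ B = Set.univ ∧
    ∀ a ∈ A, ∀ b ∈ B, a < b

/-- The set `F_{L'} = {f_{α,β} : α, β ∈ L' incomparable}` for a subset `L'` of a lattice. -/
def hibiSetOn (k : Type*) [Field k] {σ : Type*} [Lattice σ] (L' : Set σ) :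
    Set (MvPolynomial σ k) :=
  {g | ∃ α ∈ L', ∃ β ∈ L', ¬ α ≤ β ∧ ¬ β ≤ α ∧ g = hibiPoly k α β}

section Aux

variable {σ : Type*} {k : Type*} [Field k]

/-- The subalgebra of polynomials all of whose exponents lie in an additive submonoid `M`. -/
def expSubalgebra (k : Type*) [Field k] {σ : Type*} (M : AddSubmonoid (σ →₀ ℕ)) :
    Subalgebra k (MvPolynomial σ k) where
  carrier := {f | ∀ e ∈ f.support, e ∈ M}
  add_mem' := by
    classical
    intro p q hp hq e he
    rcases Finset.mem_union.mp (MvPolynomial.support_add he) with h | h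
    · exact hp e h
    · exact hq e h
  mul_mem' := by
    classical
    intro p q hp hq e he
    obtain ⟨a, ha, b, hb, rfl⟩ := Finset.mem_add.mp (MvPolynomial.support_mul p q he)
    exact M.add_mem (hp a ha) (hq b hb)
  algebraMap_mem' := by
    intro c e he
    rw [MvPolynomial.algebraMap_eq, MvPolynomial.C_apply] at he
    have := Finset.mem_singleton.mp (MvPolynomial.support_monomial_subset he)
    exact this ▸ M.zero_mem

lemma degree_mem_support (m : MonomialOrder σ) {f : MvPolynomial σ k} (hf : f ≠ 0) :
    m.degree' f ∈ f.support := by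
  obtain ⟨d, hd, hsup⟩ := Finset.exists_mem_eq_sup f.support
    (MvPolynomial.support_nonempty.mpr hf) (fun e => m.toSyn e)
  have : m.degree' f = d := by
    rw [MonomialOrder.degree', hsup, AddEquiv.symm_apply_apply]
  exact this ▸ hd

lemma X_mul_X_eq (α β : σ) :
    (MvPolynomial.X α * MvPolynomial.X β : MvPolynomial σ k)
      = MvPolynomial.monomial (Finsupp.single α 1 + Finsupp.single β 1) 1 := by
  rw [MvPolynomial.X, MvPolynomial.X, MvPolynomial.monomial_mul, one_mul]

lemma leadingTerm_zero (m : MonomialOrder σ) :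
    m.leadingTerm' (0 : MvPolynomial σ k) = 0 := by
  simp [MonomialOrder.leadingTerm']

lemma mem_support_pair {α β x : σ}
    (hx : x ∈ (Finsupp.single α 1 + Finsupp.single β 1).support) : x = α ∨ x = β := by
  classical
  rcases Finset.mem_union.mp (Finsupp.support_add hx) with hh | hh
  · exact Or.inl (Finset.mem_singleton.mp (Finsupp.support_single_subset hh))
  · exact Or.inr (Finset.mem_singleton.mp (Finsupp.support_single_subset hh))

lemma support_left_subset_support_add {e₁ e₂ : σ →₀ ℕ} :
    e₁.support ⊆ (e₁ + e₂).support := by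
  intro x hx
  rw [Finsupp.mem_support_iff] at hx ⊢
  rw [Finsupp.add_apply]
  omega

end Aux

/-- If `F_{L(P)}` is a Khovanskii basis of `R(L(P))` with respect to a compatible monomial
order, then for every sublattice `L' ⊆ L(P)`, the set `F_{L'}` is a Khovanskii basis of
`R(L') = k[F_{L'}]` with respect to the same order. -/
theorem statement2 {P : Type*} [PartialOrder P] [Fintype P] (k : Type*) [Field k]
    (m : MonomialOrder (LowerSet P)) (hm : IsCompatible k m)
    (L' : Set (LowerSet P))
    (hsup : ∀ α ∈ L', ∀ β ∈ L', α ⊔ β ∈ L')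
    (hinf : ∀ α ∈ L', ∀ β ∈ L', α ⊓ β ∈ L')
    (h : IsKhovanskiiBasis m (Algebra.adjoin k (hibiSet k (LowerSet P)))
      (hibiSet k (LowerSet P))) :
    IsKhovanskiiBasis m (Algebra.adjoin k (hibiSetOn k L')) (hibiSetOn k L') := by
  classical
  set T := Algebra.adjoin k (m.leadingTerm' '' {f ∈ hibiSetOn k L' | f ≠ 0}) with hT
  have hsubset : hibiSetOn k L' ⊆ hibiSet k (LowerSet P) := by
    rintro g ⟨α, hα, β, hβ, h1, h2, rfl⟩
    exact ⟨α, β, h1, h2, rfl⟩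
  -- the additive monoid of exponents coming from incomparable pairs
  set S : Set (LowerSet P →₀ ℕ) :=
    {e | ∃ α β : LowerSet P, ¬ α ≤ β ∧ ¬ β ≤ α ∧
      e = Finsupp.single α 1 + Finsupp.single β 1} with hS
  -- the submonoid of exponents supported on L'
  set ML : AddSubmonoid (LowerSet P →₀ ℕ) :=
    { carrier := {e | ∀ x ∈ e.support, x ∈ L'}
      add_mem' := by
        intro a b ha hb x hx
        rcases Finset.mem_union.mp (Finsupp.support_add hx) with hh | hh
        · exact ha x hh
        · exact hb x hh
      zero_mem' := by simp } with hML
  -- Lemma A': elements of the initial algebra of R(L(P)) have exponents in closure S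
  have lemA : Algebra.adjoin k (m.leadingTerm' '' {f ∈ hibiSet k (LowerSet P) | f ≠ 0})
      ≤ expSubalgebra k (AddSubmonoid.closure S) := by
    apply Algebra.adjoin_le
    rintro g ⟨p, ⟨⟨α, β, h1, h2, rfl⟩, hp0⟩, rfl⟩
    intro e he
    rw [hm α β h1 h2, X_mul_X_eq] at he
    have := MvPolynomial.support_monomial_subset he
    rw [Finset.mem_singleton] at this
    subst this
    exact AddSubmonoid.subset_closure ⟨α, β, h1, h2, rfl⟩
  -- Lemma C: elements of R(L') have all exponents supported on L'
  have lemC : Algebra.adjoin k (hibiSetOn k L') ≤ expSubalgebra k ML := by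
    apply Algebra.adjoin_le
    rintro g ⟨α, hα, β, hβ, h1, h2, rfl⟩
    intro e he
    intro x hx
    rw [hibiPoly] at he
    rcases Finset.mem_union.mp (MvPolynomial.support_sub _ _ _ he) with hh | hh
    · rw [X_mul_X_eq] at hh
      have := Finset.mem_singleton.mp (MvPolynomial.support_monomial_subset hh)
      subst this
      rcases mem_support_pair hx with rfl | rfl
      · exact hα
      · exact hβ
    · rw [X_mul_X_eq] at hh
      have := Finset.mem_singleton.mp (MvPolynomial.support_monomial_subset hh)
      subst this
      rcases mem_support_pair hx with rfl | rfl
      · exact hinf α hα β hβ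
      · exact hsup α hα β hβ
  -- Lemma B: a monomial with exponent in closure S supported on L' lies in T
  have lemB : ∀ e ∈ AddSubmonoid.closure S, (∀ x ∈ e.support, x ∈ L') →
      (MvPolynomial.monomial e (1 : k)) ∈ T := by
    intro e he
    induction he using AddSubmonoid.closure_induction with
    | mem e he =>
      obtain ⟨α, β, h1, h2, rfl⟩ := he
      intro hsupp
      have hα : α ∈ L' := by
        apply hsupp
        rw [Finsupp.mem_support_iff, Finsupp.add_apply, Finsupp.single_eq_same]
        omega
      have hβ : β ∈ L' := by
        apply hsupp
        rw [Finsupp.mem_support_iff, Finsupp.add_apply, Finsupp.single_eq_same]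
        omega
      have hne : hibiPoly k α β ≠ (0 : MvPolynomial (LowerSet P) k) := by
        intro h0
        have := hm α β h1 h2
        rw [h0, leadingTerm_zero] at this
        exact mul_ne_zero (MvPolynomial.X_ne_zero α) (MvPolynomial.X_ne_zero β) this.symm
      apply Algebra.subset_adjoin
      refine ⟨hibiPoly k α β, ⟨⟨α, hα, β, hβ, h1, h2, rfl⟩, hne⟩, ?_⟩
      rw [hm α β h1 h2, X_mul_X_eq]
    | zero =>
      intro _
      simpa using (Algebra.adjoin k
        (m.leadingTerm' '' {f ∈ hibiSetOn k L' | f ≠ 0})).one_mem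
    | add e₁ e₂ h₁ h₂ ih₁ ih₂ =>
      intro hsupp
      have hs₁ : ∀ x ∈ e₁.support, x ∈ L' :=
        fun x hx => hsupp x (support_left_subset_support_add hx)
      have hs₂ : ∀ x ∈ e₂.support, x ∈ L' := by
        intro x hx
        apply hsupp
        rw [add_comm]
        exact support_left_subset_support_add hx
      have : MvPolynomial.monomial (e₁ + e₂) (1 : k)
          = MvPolynomial.monomial e₁ (1 : k) * MvPolynomial.monomial e₂ (1 : k) := by
        rw [MvPolynomial.monomial_mul, one_mul]
      rw [this]
      exact mul_mem (ih₁ hs₁) (ih₂ hs₂)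
  constructor
  · exact Algebra.subset_adjoin
  · apply le_antisymm
    · apply Algebra.adjoin_mono
      apply Set.image_mono
      rintro f ⟨hf, hf0⟩
      exact ⟨Algebra.subset_adjoin hf, hf0⟩
    · apply Algebra.adjoin_le
      rintro g ⟨f, ⟨hfR, hf0⟩, rfl⟩
      have hfR' : f ∈ Algebra.adjoin k (hibiSet k (LowerSet P)) :=
        Algebra.adjoin_mono hsubset hfR
      have hlt : m.leadingTerm' f ∈
          Algebra.adjoin k (m.leadingTerm' '' {g ∈ hibiSet k (LowerSet P) | g ≠ 0}) := by
        rw [h.2]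
        exact Algebra.subset_adjoin ⟨f, ⟨hfR', hf0⟩, rfl⟩
      have hc : f.coeff (m.degree' f) ≠ 0 :=
        MvPolynomial.mem_support_iff.mp (degree_mem_support m hf0)
      have hdM : m.degree' f ∈ AddSubmonoid.closure S := by
        have := lemA hlt (m.degree' f) ?_
        · exact this
        · rw [MonomialOrder.leadingTerm', MvPolynomial.support_monomial]
          simp [hc]
      have hdL : ∀ x ∈ (m.degree' f).support, x ∈ L' :=
        lemC hfR (m.degree' f) (degree_mem_support m hf0)
      have hmon : (MvPolynomial.monomial (m.degree' f) (1 : k)) ∈ T := lemB _ hdM hdL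
      have : m.leadingTerm' f
          = f.coeff (m.degree' f) • MvPolynomial.monomial (m.degree' f) (1 : k) := by
        rw [MonomialOrder.leadingTerm', MvPolynomial.smul_monomial, smul_eq_mul, mul_one]
      rw [this]
      exact Subalgebra.smul_mem _ hmon _
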